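/- For every integer k ≥ 2, all weight vectors w, w' in the simplex 𝒲_k, and all probability measures F₁, F'₁, …, F_k, F'_k on a measurable space (𝒳, 𝒜), the Hellinger distance satisfies h(∑_{i=1}^k wᵢ Fᵢ, ∑_{i=1}^k w'ᵢ F'ᵢ) ≤ h(w, w') + max_{1≤i≤k} h(Fᵢ, F'ᵢ), where h(w, w') denotes the Hellinger distance between the discrete probability distributions on {1,…,k} with weights w and w'. -/

import Mathlib

open MeasureTheory Real
open scoped ENNReal

noncomputable section

variable {𝒳 : Type*} [MeasurableSpace 𝒳]

/-- Squared Hellinger distance between two measures. -/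
def hellingerSq (P Q : Measure 𝒳) : ℝ :=
  (1 / 2) * ∫ x, (Real.sqrt ((P.rnDeriv (P + Q) x).toReal)
      - Real.sqrt ((Q.rnDeriv (P + Q) x).toReal)) ^ 2 ∂(P + Q)

/-- Hellinger distance between two measures. -/
def hellinger (P Q : Measure 𝒳) : ℝ := Real.sqrt (hellingerSq P Q)

/-- Hellinger distance between two weight vectors. -/
def hellingerVec {k : ℕ} (w w' : Fin k → ℝ) : ℝ :=
  Real.sqrt ((1 / 2) * ∑ i, (Real.sqrt (w i) - Real.sqrt (w' i)) ^ 2)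

/-- Total variation distance. -/
def tvDist (P Q : Measure 𝒳) : ℝ :=
  ⨆ s : { s : Set 𝒳 // MeasurableSet s }, |(P s.1).toReal - (Q s.1).toReal|

/-- Mixture of measures with real weights. -/
def mix {k : ℕ} (β : Fin k → ℝ) (Q : Fin k → Measure 𝒳) : Measure 𝒳 :=
  ∑ i, ENNReal.ofReal (β i) • Q i

/-- Linear independence of finite measures, viewed in the real vector space of
finite signed measures: the only real linear combination vanishing on every
measurable set is the trivial one. -/
def MeasLinIndep {k : ℕ} (F : Fin k → Measure 𝒳) : Prop :=
  ∀ c : Fin k → ℝ, (∀ s : Set 𝒳, MeasurableSet s → ∑ i, c i * (F i s).toReal = 0) → c = 0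

/-- The constant Δ*(F₁,…,F_k). -/
def Δstar {k : ℕ} (F : Fin k → Measure 𝒳) : ℝ :=
  ⨅ I : { I : Finset (Fin k) // I.Nonempty ∧ I ≠ Finset.univ },
    ⨅ γ : { γ : Fin k → ℝ // (∀ i, 0 ≤ γ i) ∧ ∑ i ∈ I.1, γ i = 1 },
      ⨅ l : { l : Fin k → ℝ // (∀ i, 0 ≤ l i) ∧ ∑ i ∈ I.1ᶜ, l i = 1 },
        tvDist (∑ i ∈ I.1, ENNReal.ofReal (γ.1 i) • F i)
          (∑ i ∈ I.1ᶜ, ENNReal.ofReal (l.1 i) • F i)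

/-- ψ(√r) where ψ(x) = (x−1)/(x+1), with ψ(√∞) = 1. -/
def ψρ (r : ℝ≥0∞) : ℝ :=
  if r = ⊤ then 1 else (Real.sqrt r.toReal - 1) / (Real.sqrt r.toReal + 1)

/-- Ratio b/a in [0,∞] with conventions 0/0 = 1 and a/0 = ∞ for a > 0. -/
def densRatio (a b : ℝ) : ℝ≥0∞ :=
  if a = 0 ∧ b = 0 then 1 else ENNReal.ofReal b / ENNReal.ofReal a

/-- The statistic T(x,q,q') = ∑ᵢ ψ(√(q'(xᵢ)/q(xᵢ))). -/
def Tρ {n : ℕ} (x : Fin n → 𝒳) (q q' : 𝒳 → ℝ) : ℝ :=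
  ∑ i, ψρ (densRatio (q (x i)) (q' (x i)))

/-- The rational points of the simplex, 𝒲_k ∩ ℚ^k. -/
def ratSimplex (k : ℕ) : Set (Fin k → ℝ) :=
  { β | β ∈ stdSimplex ℝ (Fin k) ∧ ∀ i, ∃ r : ℚ, β i = (r : ℝ) }

/-- Mixture density ∑ⱼ βⱼ qⱼ. -/
def mixDens {k : ℕ} (q : Fin k → 𝒳 → ℝ) (β : Fin k → ℝ) : 𝒳 → ℝ :=
  fun x => ∑ j, β j * q j x

/-- Υ(x,p) = sup over the model ℳ_mix(q₁,…,q_k) of T(x,p,·). -/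
def Υρ {n k : ℕ} (q : Fin k → 𝒳 → ℝ) (x : Fin n → 𝒳) (p : 𝒳 → ℝ) : ℝ :=
  ⨆ β : ratSimplex k, Tρ x p (mixDens q β.1)

/-- The set 𝓔(x) of candidate ρ-estimators on the model ℳ_mix(q₁,…,q_k). -/
def rhoEstSet {n k : ℕ} (μ : Measure 𝒳) (q : Fin k → 𝒳 → ℝ) (x : Fin n → 𝒳) :
    Set (Measure 𝒳) :=
  { P | ∃ β ∈ ratSimplex k,
      P = μ.withDensity (fun y => ENNReal.ofReal (mixDens q β y)) ∧
      Υρ q x (mixDens q β) < (⨅ β' : ratSimplex k, Υρ q x (mixDens q β'.1)) + 11.36 }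

/-- Closure of a set of measures with respect to the Hellinger distance. -/
def hellClosure (S : Set (Measure 𝒳)) : Set (Measure 𝒳) :=
  { P | ∀ ε > 0, ∃ Q ∈ S, hellinger P Q < ε }

/-- The Bayes predictor associated with weights α and densities q. -/
def bayesPred {k : ℕ} (α : Fin k → ℝ) (q : Fin k → 𝒳 → ℝ) : 𝒳 → Fin k → ℝ :=
  fun x i => α i * q i x / ∑ j, α j * q j x

/-- The joint distribution Π*_α on 𝒳 × [k] with ℙ(Y = i) = αᵢ and law of X given
Y = i equal to Q i. -/
def jointLaw {k : ℕ} (α : Fin k → ℝ) (Q : Fin k → Measure 𝒳) : Measure (𝒳 × Fin k) :=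
  ∑ i, ENNReal.ofReal (α i) • ((Q i).prod (Measure.dirac i))

/-- Marginal calibration: fᵢ(X) = 𝔼[1_{Y=i} | fᵢ(X)] a.s. for all i. -/
def MarginallyCalibrated {k : ℕ} (f : 𝒳 → Fin k → ℝ) (Pm : Measure (𝒳 × Fin k)) : Prop :=
  ∀ i, (fun ω : 𝒳 × Fin k => f ω.1 i)
    =ᵐ[Pm] Pm[(fun ω : 𝒳 × Fin k => if ω.2 = i then (1 : ℝ) else 0) |
        MeasurableSpace.comap (fun ω : 𝒳 × Fin k => f ω.1 i) inferInstance]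

/-- Canonical calibration: fᵢ(X) = 𝔼[1_{Y=i} | f(X)] a.s. for all i. -/
def CanonicallyCalibrated {k : ℕ} (f : 𝒳 → Fin k → ℝ) (Pm : Measure (𝒳 × Fin k)) : Prop :=
  ∀ i, (fun ω : 𝒳 × Fin k => f ω.1 i)
    =ᵐ[Pm] Pm[(fun ω : 𝒳 × Fin k => if ω.2 = i then (1 : ℝ) else 0) |
        MeasurableSpace.comap (fun ω : 𝒳 × Fin k => f ω.1) inferInstance]

open scoped Classical in
/-- Kullback–Leibler divergence. -/
def klDiv' (P Q : Measure 𝒳) : EReal :=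
  if P ≪ Q ∧ Integrable (fun x => Real.log ((P.rnDeriv Q x).toReal)) P
  then ((∫ x, Real.log ((P.rnDeriv Q x).toReal) ∂P : ℝ) : EReal)
  else ⊤

end

section

variable {𝒳 : Type*} [MeasurableSpace 𝒳]

/-! ### Auxiliary lemmas -/

/-- Cauchy–Schwarz for integrals. -/
lemma aux_integral_mul_le_sqrt (μ : Measure 𝒳) (f g : 𝒳 → ℝ)
    (hf : MemLp f 2 μ) (hg : MemLp g 2 μ) :
    ∫ x, f x * g x ∂μ ≤ Real.sqrt (∫ x, f x ^ 2 ∂μ) * Real.sqrt (∫ x, g x ^ 2 ∂μ) := by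
  have hfg : Integrable (fun x => f x * g x) μ := by
    refine Integrable.mono' ((hf.integrable_sq.add hg.integrable_sq).const_mul (1 / 2))
      (hf.1.mul hg.1) ?_
    filter_upwards with x
    simp only [Pi.add_apply]
    rw [Real.norm_eq_abs, abs_mul]
    nlinarith [sq_nonneg (|f x| - |g x|), sq_abs (f x), sq_abs (g x), abs_nonneg (f x),
      abs_nonneg (g x)]
  have h2 : Real.HolderConjugate 2 2 := Real.HolderConjugate.two_two
  have hfn : MemLp (fun x => |f x|) (ENNReal.ofReal 2) μ := by
    simpa [Real.norm_eq_abs] using hf.norm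
  have hgn : MemLp (fun x => |g x|) (ENNReal.ofReal 2) μ := by
    simpa [Real.norm_eq_abs] using hg.norm
  have habs : ∫ x, |f x| * |g x| ∂μ
      ≤ (∫ x, |f x| ^ (2 : ℝ) ∂μ) ^ (1 / (2 : ℝ)) * (∫ x, |g x| ^ (2 : ℝ) ∂μ) ^ (1 / (2 : ℝ)) :=
    integral_mul_le_Lp_mul_Lq_of_nonneg h2 (Filter.Eventually.of_forall fun x => abs_nonneg _)
      (Filter.Eventually.of_forall fun x => abs_nonneg _) hfn hgn
  have e1 : ∫ x, |f x| ^ (2 : ℝ) ∂μ = ∫ x, f x ^ 2 ∂μ :=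
    integral_congr_ae (Filter.Eventually.of_forall fun x => by
      show |f x| ^ (2 : ℝ) = f x ^ 2
      rw [show (2 : ℝ) = ((2 : ℕ) : ℝ) by norm_num, Real.rpow_natCast, sq_abs])
  have e2 : ∫ x, |g x| ^ (2 : ℝ) ∂μ = ∫ x, g x ^ 2 ∂μ :=
    integral_congr_ae (Filter.Eventually.of_forall fun x => by
      show |g x| ^ (2 : ℝ) = g x ^ 2
      rw [show (2 : ℝ) = ((2 : ℕ) : ℝ) by norm_num, Real.rpow_natCast, sq_abs])
  calc ∫ x, f x * g x ∂μ ≤ ∫ x, |f x * g x| ∂μ :=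
        integral_mono hfg hfg.abs fun x => le_abs_self _
    _ = ∫ x, |f x| * |g x| ∂μ := by simp_rw [abs_mul]
    _ ≤ (∫ x, |f x| ^ (2 : ℝ) ∂μ) ^ (1 / (2 : ℝ)) * (∫ x, |g x| ^ (2 : ℝ) ∂μ) ^ (1 / (2 : ℝ)) :=
        habs
    _ = Real.sqrt (∫ x, f x ^ 2 ∂μ) * Real.sqrt (∫ x, g x ^ 2 ∂μ) := by
        rw [e1, e2, ← Real.sqrt_eq_rpow, ← Real.sqrt_eq_rpow]

/-- Minkowski-type inequality. -/
lemma aux_sqrt_integral_add_sq_le (μ : Measure 𝒳) (f g : 𝒳 → ℝ)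
    (hf : MemLp f 2 μ) (hg : MemLp g 2 μ) :
    Real.sqrt (∫ x, (f x + g x) ^ 2 ∂μ)
      ≤ Real.sqrt (∫ x, f x ^ 2 ∂μ) + Real.sqrt (∫ x, g x ^ 2 ∂μ) := by
  have hf2 : Integrable (fun x => f x ^ 2) μ := hf.integrable_sq
  have hg2 : Integrable (fun x => g x ^ 2) μ := hg.integrable_sq
  have hfg : Integrable (fun x => f x * g x) μ := by
    refine Integrable.mono' ((hf2.add hg2).const_mul (1 / 2)) (hf.1.mul hg.1) ?_
    filter_upwards with x
    simp only [Pi.add_apply]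
    rw [Real.norm_eq_abs, abs_mul]
    nlinarith [sq_nonneg (|f x| - |g x|), sq_abs (f x), sq_abs (g x), abs_nonneg (f x),
      abs_nonneg (g x)]
  have hA : 0 ≤ ∫ x, f x ^ 2 ∂μ := integral_nonneg fun x => sq_nonneg _
  have hB : 0 ≤ ∫ x, g x ^ 2 ∂μ := integral_nonneg fun x => sq_nonneg _
  have hCS := aux_integral_mul_le_sqrt μ f g hf hg
  have expand : ∫ x, (f x + g x) ^ 2 ∂μ
      = ∫ x, f x ^ 2 ∂μ + 2 * ∫ x, f x * g x ∂μ + ∫ x, g x ^ 2 ∂μ := by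
    have h : ∀ x, (f x + g x) ^ 2 = f x ^ 2 + 2 * (f x * g x) + g x ^ 2 := fun x => by ring
    simp_rw [h]
    have i2 : Integrable (fun x => 2 * (f x * g x)) μ := hfg.const_mul 2
    have i1 : Integrable (fun x => f x ^ 2 + 2 * (f x * g x)) μ := hf2.add i2
    rw [integral_add i1 hg2, integral_add hf2 i2, integral_const_mul]
  have hle : ∫ x, (f x + g x) ^ 2 ∂μ
      ≤ (Real.sqrt (∫ x, f x ^ 2 ∂μ) + Real.sqrt (∫ x, g x ^ 2 ∂μ)) ^ 2 := by
    rw [expand]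
    nlinarith [Real.sq_sqrt hA, Real.sq_sqrt hB, hCS]
  calc Real.sqrt (∫ x, (f x + g x) ^ 2 ∂μ)
      ≤ Real.sqrt ((Real.sqrt (∫ x, f x ^ 2 ∂μ) + Real.sqrt (∫ x, g x ^ 2 ∂μ)) ^ 2) :=
        Real.sqrt_le_sqrt hle
    _ = _ := Real.sqrt_sq (by positivity)

/-- Triangle inequality for the `L²(μ)` (semi)distance. -/
lemma aux_sqrt_integral_triangle (μ : Measure 𝒳) (u m v : 𝒳 → ℝ)
    (hu : MemLp u 2 μ) (hm : MemLp m 2 μ) (hv : MemLp v 2 μ) :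
    Real.sqrt (∫ x, (u x - v x) ^ 2 ∂μ)
      ≤ Real.sqrt (∫ x, (u x - m x) ^ 2 ∂μ) + Real.sqrt (∫ x, (m x - v x) ^ 2 ∂μ) := by
  have h := aux_sqrt_integral_add_sq_le μ (fun x => u x - m x) (fun x => m x - v x)
    (hu.sub hm) (hm.sub hv)
  simpa [sub_add_sub_cancel] using h

/-- Finite-dimensional Cauchy–Schwarz consequence. -/
lemma aux_sqrt_sum_sub_sq_le {k : ℕ} (a b : Fin k → ℝ) (ha : ∀ i, 0 ≤ a i)
    (hb : ∀ i, 0 ≤ b i) :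
    (Real.sqrt (∑ i, a i) - Real.sqrt (∑ i, b i)) ^ 2
      ≤ ∑ i, (Real.sqrt (a i) - Real.sqrt (b i)) ^ 2 := by
  have hA : 0 ≤ ∑ i, a i := Finset.sum_nonneg fun i _ => ha i
  have hB : 0 ≤ ∑ i, b i := Finset.sum_nonneg fun i _ => hb i
  have hcs : ∑ i, Real.sqrt (a i) * Real.sqrt (b i)
      ≤ Real.sqrt (∑ i, a i) * Real.sqrt (∑ i, b i) := by
    rw [← Real.sqrt_mul hA]
    refine Real.le_sqrt_of_sq_le ?_
    calc (∑ i, Real.sqrt (a i) * Real.sqrt (b i)) ^ 2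
        ≤ (∑ i, Real.sqrt (a i) ^ 2) * ∑ i, Real.sqrt (b i) ^ 2 :=
          Finset.sum_mul_sq_le_sq_mul_sq _ _ _
      _ = (∑ i, a i) * ∑ i, b i := by
          rw [Finset.sum_congr rfl fun i _ => Real.sq_sqrt (ha i),
            Finset.sum_congr rfl fun i _ => Real.sq_sqrt (hb i)]
  have eR0 : ∀ i : Fin k, (Real.sqrt (a i) - Real.sqrt (b i)) ^ 2
      = a i + b i - 2 * (Real.sqrt (a i) * Real.sqrt (b i)) := fun i => by
    rw [sub_sq, Real.sq_sqrt (ha i), Real.sq_sqrt (hb i)]; ring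
  have eR : ∑ i, (Real.sqrt (a i) - Real.sqrt (b i)) ^ 2
      = ∑ i, a i + ∑ i, b i - 2 * ∑ i, Real.sqrt (a i) * Real.sqrt (b i) := by
    rw [Finset.sum_congr rfl fun i _ => eR0 i, Finset.sum_sub_distrib,
      Finset.sum_add_distrib, ← Finset.mul_sum]
  rw [sub_sq, Real.sq_sqrt hA, Real.sq_sqrt hB, eR]
  linarith

/-- The squared Hellinger distance can be computed with any dominating σ-finite measure. -/
lemma aux_hellingerSq_eq_integral (P Q ν : Measure 𝒳) [IsFiniteMeasure P] [IsFiniteMeasure Q]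
    [SigmaFinite ν] (hP : P ≪ ν) (hQ : Q ≪ ν) :
    hellingerSq P Q = (1 / 2) * ∫ x,
      (Real.sqrt ((P.rnDeriv ν x).toReal) - Real.sqrt ((Q.rnDeriv ν x).toReal)) ^ 2 ∂ν := by
  have hμν : P + Q ≪ ν := Measure.AbsolutelyContinuous.add_left hP hQ
  have hPμ : P ≪ P + Q := Measure.absolutelyContinuous_of_le (Measure.le_add_right le_rfl)
  have hQμ : Q ≪ P + Q := Measure.absolutelyContinuous_of_le (Measure.le_add_left le_rfl)
  have hfin : ∀ᵐ x ∂ν, (P + Q).rnDeriv ν x < ∞ := Measure.rnDeriv_lt_top (P + Q) ν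
  set g : 𝒳 → NNReal := fun x => ((P + Q).rnDeriv ν x).toNNReal with hgdef
  have hgmeas : Measurable g := (Measure.measurable_rnDeriv _ _).ennreal_toNNReal
  have hμeq : P + Q = ν.withDensity (fun x => (g x : ℝ≥0∞)) := by
    rw [← Measure.withDensity_rnDeriv_eq (P + Q) ν hμν]
    exact withDensity_congr_ae (hfin.mono fun x hx => (ENNReal.coe_toNNReal hx.ne).symm)
  have hint : ∀ h : 𝒳 → ℝ,
      ∫ x, h x ∂(P + Q) = ∫ x, h x * ((P + Q).rnDeriv ν x).toReal ∂ν := by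
    intro h
    conv_lhs => rw [hμeq]
    rw [integral_withDensity_eq_integral_smul hgmeas]
    refine integral_congr_ae (Filter.Eventually.of_forall fun x => ?_)
    show g x • h x = h x * ((P + Q).rnDeriv ν x).toReal
    rw [NNReal.smul_def, mul_comm]
    rfl
  have hPν := Measure.rnDeriv_mul_rnDeriv (κ := ν) hPμ
  have hQν := Measure.rnDeriv_mul_rnDeriv (κ := ν) hQμ
  have key : ∀ p q c : ℝ, 0 ≤ p → 0 ≤ q → 0 ≤ c →
      (Real.sqrt p - Real.sqrt q) ^ 2 * c
        = (Real.sqrt (p * c) - Real.sqrt (q * c)) ^ 2 := by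
    intro p q c hp hq hc
    rw [Real.sqrt_mul hp, Real.sqrt_mul hq]
    linear_combination (-(Real.sqrt p - Real.sqrt q) ^ 2) * Real.sq_sqrt hc
  unfold hellingerSq
  rw [hint]
  congr 1
  refine integral_congr_ae ?_
  filter_upwards [hPν, hQν] with x h1 h2
  simp only [Pi.mul_apply] at h1 h2
  rw [← h1, ← h2, ENNReal.toReal_mul, ENNReal.toReal_mul,
    key _ _ _ ENNReal.toReal_nonneg ENNReal.toReal_nonneg ENNReal.toReal_nonneg]

/-- A mixture is the density `∑ᵢ βᵢ (dFᵢ/dν)` against a dominating measure. -/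
lemma aux_mix_eq_withDensity {k : ℕ} (β : Fin k → ℝ) (F : Fin k → Measure 𝒳)
    (ν : Measure 𝒳) [SigmaFinite ν] [∀ i, SigmaFinite (F i)] (hF : ∀ i, F i ≪ ν) :
    mix β F = ν.withDensity (fun x => ∑ i, ENNReal.ofReal (β i) * (F i).rnDeriv ν x) := by
  ext s hs
  rw [withDensity_apply _ hs, mix, Measure.finset_sum_apply,
    lintegral_finset_sum _ fun i _ => (Measure.measurable_rnDeriv _ _).const_mul _]
  refine Finset.sum_congr rfl fun i _ => ?_
  rw [Measure.smul_apply, smul_eq_mul,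
    lintegral_const_mul _ (Measure.measurable_rnDeriv _ _)]
  congr 1
  rw [← withDensity_apply _ hs, Measure.withDensity_rnDeriv_eq _ _ (hF i)]

/-- The Radon–Nikodym derivative of a mixture. -/
lemma aux_mix_rnDeriv_toReal {k : ℕ} (β : Fin k → ℝ) (hβ : ∀ i, 0 ≤ β i)
    (F : Fin k → Measure 𝒳) (ν : Measure 𝒳) [SigmaFinite ν] [∀ i, SigmaFinite (F i)]
    (hF : ∀ i, F i ≪ ν) :
    (fun x => (((mix β F).rnDeriv ν) x).toReal)
      =ᵐ[ν] (fun x => ∑ i, β i * ((F i).rnDeriv ν x).toReal) := by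
  have hmeas : Measurable (fun x => ∑ i, ENNReal.ofReal (β i) * (F i).rnDeriv ν x) :=
    Finset.measurable_sum _ fun i _ => (Measure.measurable_rnDeriv _ _).const_mul _
  have h1 : (mix β F).rnDeriv ν =ᵐ[ν] fun x => ∑ i, ENNReal.ofReal (β i) * (F i).rnDeriv ν x := by
    rw [aux_mix_eq_withDensity β F ν hF]
    exact Measure.rnDeriv_withDensity ν hmeas
  filter_upwards [h1, ae_all_iff.2 fun i => Measure.rnDeriv_lt_top (F i) ν] with x hx hfin
  rw [hx, ENNReal.toReal_sum fun i _ => ENNReal.mul_ne_top ENNReal.ofReal_ne_top (hfin i).ne]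
  exact Finset.sum_congr rfl fun i _ => by
    rw [ENNReal.toReal_mul, ENNReal.toReal_ofReal (hβ i)]

-- STATEMENT 0
theorem statement0 {k : ℕ} (hk : 2 ≤ k)
    (w w' : Fin k → ℝ) (hw : w ∈ stdSimplex ℝ (Fin k)) (hw' : w' ∈ stdSimplex ℝ (Fin k))
    (F F' : Fin k → Measure 𝒳)
    [∀ i, IsProbabilityMeasure (F i)] [∀ i, IsProbabilityMeasure (F' i)] :
    hellinger (mix w F) (mix w' F') ≤ hellingerVec w w' + ⨆ i, hellinger (F i) (F' i) := by
  haveI : Nonempty (Fin k) := ⟨⟨0, by omega⟩⟩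
  set ν : Measure 𝒳 := (∑ i, F i) + (∑ i, F' i) with hνdef
  haveI : IsFiniteMeasure ν := by
    constructor
    rw [hνdef]
    simp only [Measure.add_apply, Measure.finset_sum_apply, measure_univ, Finset.sum_const,
      Finset.card_univ, Fintype.card_fin, nsmul_eq_mul, mul_one]
    exact ENNReal.add_lt_top.mpr ⟨ENNReal.natCast_lt_top k, ENNReal.natCast_lt_top k⟩
  have hle1 : ∀ i, F i ≤ ∑ j, F j := fun i => by
    refine Measure.le_intro fun s hs _ => ?_
    rw [Measure.finset_sum_apply]
    exact Finset.single_le_sum (f := fun j => (F j) s) (fun j _ => zero_le)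
      (Finset.mem_univ i)
  have hle2 : ∀ i, F' i ≤ ∑ j, F' j := fun i => by
    refine Measure.le_intro fun s hs _ => ?_
    rw [Measure.finset_sum_apply]
    exact Finset.single_le_sum (f := fun j => (F' j) s) (fun j _ => zero_le)
      (Finset.mem_univ i)
  have hFν : ∀ i, F i ≪ ν := fun i =>
    Measure.absolutelyContinuous_of_le ((hle1 i).trans (Measure.le_add_right le_rfl))
  have hF'ν : ∀ i, F' i ≪ ν := fun i =>
    Measure.absolutelyContinuous_of_le ((hle2 i).trans (Measure.le_add_left le_rfl))
  set p : Fin k → 𝒳 → ℝ := fun i x => ((F i).rnDeriv ν x).toReal with hpdef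
  set p' : Fin k → 𝒳 → ℝ := fun i x => ((F' i).rnDeriv ν x).toReal with hp'def
  have hpmeas : ∀ i, Measurable (p i) := fun i => (Measure.measurable_rnDeriv _ _).ennreal_toReal
  have hp'meas : ∀ i, Measurable (p' i) := fun i =>
    (Measure.measurable_rnDeriv _ _).ennreal_toReal
  have hpint : ∀ i, Integrable (p i) ν := fun i => Measure.integrable_toReal_rnDeriv
  have hp'int : ∀ i, Integrable (p' i) ν := fun i => Measure.integrable_toReal_rnDeriv
  have hpnn : ∀ i x, 0 ≤ p i x := fun i x => ENNReal.toReal_nonneg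
  have hp'nn : ∀ i x, 0 ≤ p' i x := fun i x => ENNReal.toReal_nonneg
  have hp1 : ∀ i, ∫ x, p i x ∂ν = 1 := fun i => by
    rw [hpdef]; rw [Measure.integral_toReal_rnDeriv (hFν i)]; simp
  set A : 𝒳 → ℝ := fun x => ∑ i, w i * p i x with hAdef
  set B : 𝒳 → ℝ := fun x => ∑ i, w' i * p' i x with hBdef
  set C : 𝒳 → ℝ := fun x => ∑ i, w' i * p i x with hCdef
  have hAnn : ∀ x, 0 ≤ A x := fun x =>
    Finset.sum_nonneg fun i _ => mul_nonneg (hw.1 i) (hpnn i x)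
  have hBnn : ∀ x, 0 ≤ B x := fun x =>
    Finset.sum_nonneg fun i _ => mul_nonneg (hw'.1 i) (hp'nn i x)
  have hCnn : ∀ x, 0 ≤ C x := fun x =>
    Finset.sum_nonneg fun i _ => mul_nonneg (hw'.1 i) (hpnn i x)
  have hAmeas : Measurable A := Finset.measurable_sum _ fun i _ => (hpmeas i).const_mul _
  have hBmeas : Measurable B := Finset.measurable_sum _ fun i _ => (hp'meas i).const_mul _
  have hCmeas : Measurable C := Finset.measurable_sum _ fun i _ => (hpmeas i).const_mul _
  have hAint : Integrable A ν := integrable_finset_sum _ fun i _ => (hpint i).const_mul _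
  have hBint : Integrable B ν := integrable_finset_sum _ fun i _ => (hp'int i).const_mul _
  have hCint : Integrable C ν := integrable_finset_sum _ fun i _ => (hpint i).const_mul _
  have memSqrt : ∀ h : 𝒳 → ℝ, Measurable h → (∀ x, 0 ≤ h x) → Integrable h ν →
      MemLp (fun x => Real.sqrt (h x)) 2 ν := by
    intro h hm hnn hint
    refine (memLp_two_iff_integrable_sq ?_).mpr ?_
    · exact (Real.continuous_sqrt.measurable.comp hm).aestronglyMeasurable
    · exact hint.congr (Filter.Eventually.of_forall fun x => (Real.sq_sqrt (hnn x)).symm)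
  have memA := memSqrt A hAmeas hAnn hAint
  have memB := memSqrt B hBmeas hBnn hBint
  have memC := memSqrt C hCmeas hCnn hCint
  haveI hfmF : IsFiniteMeasure (mix w F) := by
    constructor
    simp only [mix, Measure.finset_sum_apply, Measure.smul_apply, measure_univ, smul_eq_mul,
      mul_one]
    exact ENNReal.sum_lt_top.mpr fun i _ => ENNReal.ofReal_lt_top
  haveI hfmF' : IsFiniteMeasure (mix w' F') := by
    constructor
    simp only [mix, Measure.finset_sum_apply, Measure.smul_apply, measure_univ, smul_eq_mul,
      mul_one]
    exact ENNReal.sum_lt_top.mpr fun i _ => ENNReal.ofReal_lt_top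
  have hmixF : mix w F ≪ ν := by
    rw [aux_mix_eq_withDensity w F ν hFν]
    exact withDensity_absolutelyContinuous _ _
  have hmixF' : mix w' F' ≪ ν := by
    rw [aux_mix_eq_withDensity w' F' ν hF'ν]
    exact withDensity_absolutelyContinuous _ _
  have hL : hellinger (mix w F) (mix w' F')
      = Real.sqrt ((1 / 2) * ∫ x, (Real.sqrt (A x) - Real.sqrt (B x)) ^ 2 ∂ν) := by
    unfold hellinger
    rw [aux_hellingerSq_eq_integral _ _ ν hmixF hmixF']
    congr 2
    refine integral_congr_ae ?_
    filter_upwards [aux_mix_rnDeriv_toReal w hw.1 F ν hFν,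
      aux_mix_rnDeriv_toReal w' hw'.1 F' ν hF'ν] with x h1 h2
    rw [h1, h2]
  have hHi : ∀ i, ∫ x, (Real.sqrt (p i x) - Real.sqrt (p' i x)) ^ 2 ∂ν
      = 2 * hellinger (F i) (F' i) ^ 2 := by
    intro i
    have h0 := aux_hellingerSq_eq_integral (F i) (F' i) ν (hFν i) (hF'ν i)
    have hnn : 0 ≤ hellingerSq (F i) (F' i) := by
      rw [h0]; positivity
    have hsq : hellinger (F i) (F' i) ^ 2 = hellingerSq (F i) (F' i) := Real.sq_sqrt hnn
    rw [hsq, h0]; ring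
  set S := ⨆ i, hellinger (F i) (F' i) with hSdef
  have hhnn : ∀ i, 0 ≤ hellinger (F i) (F' i) := fun i => Real.sqrt_nonneg _
  have hSle : ∀ i, hellinger (F i) (F' i) ≤ S := by
    intro i
    rw [hSdef]
    exact le_ciSup (f := fun j => hellinger (F j) (F' j))
      (Set.Finite.bddAbove (Set.finite_range _)) i
  have hS0 : 0 ≤ S := le_trans (hhnn ⟨0, by omega⟩) (hSle ⟨0, by omega⟩)
  have T1 : ∫ x, (Real.sqrt (A x) - Real.sqrt (C x)) ^ 2 ∂ν
      ≤ ∑ i, (Real.sqrt (w i) - Real.sqrt (w' i)) ^ 2 := by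
    have hle : ∀ x, (Real.sqrt (A x) - Real.sqrt (C x)) ^ 2
        ≤ ∑ i, (Real.sqrt (w i) - Real.sqrt (w' i)) ^ 2 * p i x := by
      intro x
      have h := aux_sqrt_sum_sub_sq_le (fun i => w i * p i x) (fun i => w' i * p i x)
        (fun i => mul_nonneg (hw.1 i) (hpnn i x)) (fun i => mul_nonneg (hw'.1 i) (hpnn i x))
      refine h.trans (le_of_eq (Finset.sum_congr rfl fun i _ => ?_))
      rw [Real.sqrt_mul (hw.1 i), Real.sqrt_mul (hw'.1 i)]
      linear_combination (Real.sqrt (w i) - Real.sqrt (w' i)) ^ 2 * Real.sq_sqrt (hpnn i x)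
    calc ∫ x, (Real.sqrt (A x) - Real.sqrt (C x)) ^ 2 ∂ν
        ≤ ∫ x, ∑ i, (Real.sqrt (w i) - Real.sqrt (w' i)) ^ 2 * p i x ∂ν :=
          integral_mono_of_nonneg (Filter.Eventually.of_forall fun x => sq_nonneg _)
            (integrable_finset_sum _ fun i _ => (hpint i).const_mul _)
            (Filter.Eventually.of_forall hle)
      _ = ∑ i, (Real.sqrt (w i) - Real.sqrt (w' i)) ^ 2 := by
          rw [integral_finset_sum _ fun i _ => (hpint i).const_mul _]
          refine Finset.sum_congr rfl fun i _ => ?_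
          rw [integral_const_mul, hp1 i, mul_one]
  have hint2 : ∀ i, Integrable (fun x => (Real.sqrt (p i x) - Real.sqrt (p' i x)) ^ 2) ν := by
    intro i
    exact ((memSqrt _ (hpmeas i) (hpnn i) (hpint i)).sub
      (memSqrt _ (hp'meas i) (hp'nn i) (hp'int i))).integrable_sq
  have T2 : ∫ x, (Real.sqrt (C x) - Real.sqrt (B x)) ^ 2 ∂ν ≤ 2 * S ^ 2 := by
    have hle : ∀ x, (Real.sqrt (C x) - Real.sqrt (B x)) ^ 2
        ≤ ∑ i, w' i * (Real.sqrt (p i x) - Real.sqrt (p' i x)) ^ 2 := by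
      intro x
      have h := aux_sqrt_sum_sub_sq_le (fun i => w' i * p i x) (fun i => w' i * p' i x)
        (fun i => mul_nonneg (hw'.1 i) (hpnn i x)) (fun i => mul_nonneg (hw'.1 i) (hp'nn i x))
      refine h.trans (le_of_eq (Finset.sum_congr rfl fun i _ => ?_))
      rw [Real.sqrt_mul (hw'.1 i) (p i x), Real.sqrt_mul (hw'.1 i) (p' i x)]
      linear_combination (Real.sqrt (p i x) - Real.sqrt (p' i x)) ^ 2 * Real.sq_sqrt (hw'.1 i)
    calc ∫ x, (Real.sqrt (C x) - Real.sqrt (B x)) ^ 2 ∂ν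
        ≤ ∫ x, ∑ i, w' i * (Real.sqrt (p i x) - Real.sqrt (p' i x)) ^ 2 ∂ν :=
          integral_mono_of_nonneg (Filter.Eventually.of_forall fun x => sq_nonneg _)
            (integrable_finset_sum _ fun i _ => (hint2 i).const_mul _)
            (Filter.Eventually.of_forall hle)
      _ = ∑ i, w' i * (2 * hellinger (F i) (F' i) ^ 2) := by
          rw [integral_finset_sum _ fun i _ => (hint2 i).const_mul _]
          exact Finset.sum_congr rfl fun i _ => by rw [integral_const_mul, hHi i]
      _ ≤ ∑ i, w' i * (2 * S ^ 2) := Finset.sum_le_sum fun i _ =>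
          mul_le_mul_of_nonneg_left (by nlinarith [hSle i, hhnn i]) (hw'.1 i)
      _ = 2 * S ^ 2 := by rw [← Finset.sum_mul, hw'.2, one_mul]
  have tri := aux_sqrt_integral_triangle ν (fun x => Real.sqrt (A x)) (fun x => Real.sqrt (C x))
    (fun x => Real.sqrt (B x)) memA memC memB
  rw [hL]
  unfold hellingerVec
  rw [Real.sqrt_mul (by norm_num : (0:ℝ) ≤ 1 / 2), Real.sqrt_mul (by norm_num : (0:ℝ) ≤ 1 / 2)]
  have b1 : Real.sqrt (∫ x, (Real.sqrt (A x) - Real.sqrt (C x)) ^ 2 ∂ν)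
      ≤ Real.sqrt (∑ i, (Real.sqrt (w i) - Real.sqrt (w' i)) ^ 2) := Real.sqrt_le_sqrt T1
  have b2 : Real.sqrt (∫ x, (Real.sqrt (C x) - Real.sqrt (B x)) ^ 2 ∂ν)
      ≤ Real.sqrt (2 * S ^ 2) := Real.sqrt_le_sqrt T2
  have b3 : Real.sqrt (1 / 2) * Real.sqrt (2 * S ^ 2) = S := by
    rw [← Real.sqrt_mul (by norm_num : (0:ℝ) ≤ 1 / 2),
      show (1 / 2 : ℝ) * (2 * S ^ 2) = S ^ 2 by ring, Real.sqrt_sq hS0]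
  have hhalf : (0:ℝ) ≤ Real.sqrt (1 / 2) := Real.sqrt_nonneg _
  calc Real.sqrt (1 / 2) * Real.sqrt (∫ x, (Real.sqrt (A x) - Real.sqrt (B x)) ^ 2 ∂ν)
      ≤ Real.sqrt (1 / 2) * (Real.sqrt (∫ x, (Real.sqrt (A x) - Real.sqrt (C x)) ^ 2 ∂ν)
          + Real.sqrt (∫ x, (Real.sqrt (C x) - Real.sqrt (B x)) ^ 2 ∂ν)) :=
        mul_le_mul_of_nonneg_left tri hhalf
    _ ≤ Real.sqrt (1 / 2) * (Real.sqrt (∑ i, (Real.sqrt (w i) - Real.sqrt (w' i)) ^ 2)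
          + Real.sqrt (2 * S ^ 2)) :=
        mul_le_mul_of_nonneg_left (add_le_add b1 b2) hhalf
    _ = Real.sqrt (1 / 2) * Real.sqrt (∑ i, (Real.sqrt (w i) - Real.sqrt (w' i)) ^ 2) + S := by
        rw [mul_add, b3]

end
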